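/- For every symmetric biadditive form β : (ℤ/2)ⁿ × (ℤ/2)ⁿ → ℤ/2 there exist an integer N ≤ 2n and a group homomorphism σ : (ℤ/2)ⁿ → (ℤ/2)ᴺ such that ⟨σ(x), σ(y)⟩ = β(x,y) for all x, y, where ⟨,⟩ is the standard scalar product on (ℤ/2)ᴺ. -/

import Mathlib

private lemma zmod2_add_self (x : ZMod 2) : x + x = 0 := by fin_cases x <;> rfl

private lemma zmod2_helper (d x y : ZMod 2) :
    (d + (1 + d) * 1) * (x + (1 + d) * y) + (1 + d) * 1 * ((1 + d) * y) = x := by revert d x y; decide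

/-- Key matrix lemma: every symmetric matrix over `ZMod 2` is a sum of at most `2n`
rank-one symmetric matrices. -/
private lemma key : ∀ n : ℕ, ∀ b : Fin n → Fin n → ZMod 2, (∀ i j, b i j = b j i) →
    ∃ N ≤ 2 * n, ∃ v : Fin N → Fin n → ZMod 2, ∀ i j, (∑ k, v k i * v k j) = b i j := by
  intro n
  induction n with
  | zero =>
      intro b _
      exact ⟨0, le_refl 0, fun _ => 0, fun i _ => i.elim0⟩
  | succ n ih =>
      intro b hs
      set L : Fin (n + 1) := Fin.last n with hL
      set d : ZMod 2 := b L L with hd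
      set ind : Fin (n + 1) → ZMod 2 := fun p => if p = L then 1 else 0 with hind
      set aa : Fin (n + 1) → ZMod 2 := fun p => b L p + (1 + d) * ind p with haa
      set bb : Fin (n + 1) → ZMod 2 := fun p => (1 + d) * ind p with hbb
      set M : Fin (n + 1) → Fin (n + 1) → ZMod 2 :=
        fun p q => aa p * aa q + bb p * bb q with hM
      have hindL : ind L = 1 := by simp [hind]
      have hML : ∀ q, M L q = b L q := by
        intro q
        have : M L q = (b L L + (1 + d) * ind L) * (b L q + (1 + d) * ind q)
            + ((1 + d) * ind L) * ((1 + d) * ind q) := rfl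
        rw [this, hindL, ← hd]
        exact zmod2_helper d (b L q) (ind q)
      have hMsymm : ∀ p q, M p q = M q p := by
        intro p q; show aa p * aa q + bb p * bb q = aa q * aa p + bb q * bb p; ring
      -- b' has zero last row and column
      set b' : Fin (n + 1) → Fin (n + 1) → ZMod 2 := fun p q => b p q + M p q with hb'
      have hb'L : ∀ q, b' L q = 0 := by
        intro q; show b L q + M L q = 0; rw [hML]; exact zmod2_add_self _
      have hb'colL : ∀ p, b' p L = 0 := by
        intro p; show b p L + M p L = 0
        rw [hMsymm, hML, hs L p]; exact zmod2_add_self _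
      set c : Fin n → Fin n → ZMod 2 :=
        fun p q => b' p.castSucc q.castSucc with hc
      have hcsymm : ∀ p q, c p q = c q p := by
        intro p q; show b _ _ + M _ _ = b _ _ + M _ _; rw [hs, hMsymm]
      obtain ⟨N', hN', u, hu⟩ := ih c hcsymm
      set v : Fin (N' + 2) → Fin (n + 1) → ZMod 2 :=
        Fin.append (fun k => (Fin.snoc (u k) 0 : Fin (n + 1) → ZMod 2)) ![aa, bb] with hv
      refine ⟨N' + 2, by omega, v, ?_⟩
      intro i j
      have hsum : (∑ k, v k i * v k j)
          = (∑ k : Fin N', (Fin.snoc (u k) 0 : Fin (n + 1) → ZMod 2) i * (Fin.snoc (u k) 0 : Fin (n + 1) → ZMod 2) j)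
            + (aa i * aa j + bb i * bb j) := by
        rw [Fin.sum_univ_add]
        simp [hv, Fin.sum_univ_two]
      rw [hsum]
      refine Fin.lastCases ?_ ?_ i
      · -- i = last
        have : (∑ k : Fin N', (Fin.snoc (u k) 0 : Fin (n + 1) → ZMod 2) (Fin.last n)
            * (Fin.snoc (u k) 0 : Fin (n + 1) → ZMod 2) j) = 0 := by
          simp [Fin.snoc_last]
        rw [this, zero_add]
        exact hML j
      · intro p
        refine Fin.lastCases ?_ ?_ j
        · -- j = last
          have : (∑ k : Fin N', (Fin.snoc (u k) 0 : Fin (n + 1) → ZMod 2) p.castSucc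
              * (Fin.snoc (u k) 0 : Fin (n + 1) → ZMod 2) (Fin.last n)) = 0 := by
            simp [Fin.snoc_last]
          rw [this, zero_add]
          have h1 : M p.castSucc L = b L p.castSucc := by rw [hMsymm]; exact hML _
          rw [show aa p.castSucc * aa (Fin.last n) + bb p.castSucc * bb (Fin.last n)
              = M p.castSucc L from rfl, h1, hs]
        · intro q
          have h1 : (∑ k : Fin N', (Fin.snoc (u k) 0 : Fin (n + 1) → ZMod 2) p.castSucc
              * (Fin.snoc (u k) 0 : Fin (n + 1) → ZMod 2) q.castSucc) = c p q := by
            rw [← hu p q]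
            simp [Fin.snoc_castSucc]
          rw [h1]
          show b' p.castSucc q.castSucc + M p.castSucc q.castSucc = b p.castSucc q.castSucc
          show b p.castSucc q.castSucc + M p.castSucc q.castSucc + M p.castSucc q.castSucc
              = b p.castSucc q.castSucc
          rw [add_assoc, zmod2_add_self, add_zero]

/-- For every symmetric biadditive form `β : (ℤ/2)ⁿ × (ℤ/2)ⁿ → ℤ/2` there
exist `N ≤ 2n` and a group homomorphism `σ : (ℤ/2)ⁿ → (ℤ/2)ᴺ` such that
`⟨σ x, σ y⟩ = β x y` for all `x, y`, where `⟨,⟩` is the standard scalar product. -/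
theorem stmt5 {n : ℕ} (β : (Fin n → ZMod 2) →+ (Fin n → ZMod 2) →+ ZMod 2)
    (hsymm : ∀ x y, β x y = β y x) :
    ∃ N ≤ 2 * n, ∃ σ : (Fin n → ZMod 2) →+ (Fin N → ZMod 2),
      ∀ x y, (∑ i, σ x i * σ y i) = β x y := by
  set b : Fin n → Fin n → ZMod 2 :=
    fun i j => β (Pi.single i 1) (Pi.single j 1) with hb
  obtain ⟨N, hN, v, hv⟩ := key n b (fun i j => hsymm _ _)
  refine ⟨N, hN, ⟨⟨fun x k => ∑ i, v k i * x i, ?_⟩, ?_⟩, ?_⟩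
  · funext k; simp
  · intro x y; funext k
    simp [mul_add, Finset.sum_add_distrib]
  · intro x y
    -- pointwise evaluation of β on scaled basis vectors
    have hsingle : ∀ (i j : Fin n) (cx cy : ZMod 2),
        β (Pi.single i cx) (Pi.single j cy) = cx * cy * b i j := by
      intro i j cx cy
      rcases (by decide : ∀ c : ZMod 2, c = 0 ∨ c = 1) cx with rfl | rfl <;>
        rcases (by decide : ∀ c : ZMod 2, c = 0 ∨ c = 1) cy with rfl | rfl <;>
        simp [Pi.single_zero, hb]
    have hβ : β x y = ∑ i, ∑ j, x i * y j * b i j := by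
      conv_lhs => rw [← Finset.univ_sum_single x]
      rw [map_sum β _ Finset.univ, AddMonoidHom.finset_sum_apply]
      refine Finset.sum_congr rfl fun i _ => ?_
      conv_lhs => rw [← Finset.univ_sum_single y]
      rw [map_sum]
      exact Finset.sum_congr rfl fun j _ => hsingle i j (x i) (y j)
    show (∑ k, (∑ i, v k i * x i) * (∑ j, v k j * y j)) = β x y
    rw [hβ]
    have : ∀ k : Fin N, (∑ i, v k i * x i) * (∑ j, v k j * y j)
        = ∑ i, ∑ j, (v k i * x i) * (v k j * y j) := by
      intro k; rw [Finset.sum_mul_sum]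
    rw [Finset.sum_congr rfl fun k _ => this k]
    rw [Finset.sum_comm]
    refine Finset.sum_congr rfl fun i _ => ?_
    rw [Finset.sum_comm]
    refine Finset.sum_congr rfl fun j _ => ?_
    rw [← hv i j, Finset.mul_sum]
    exact Finset.sum_congr rfl fun k _ => by ring
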